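/- Let F be a real inner product space, n a natural number, and f : EuclideanSpace ℝ (Fin n) → F a map differentiable at a point x with f(x) ≠ 0, and let e₁,…,eₙ be the standard orthonormal basis of EuclideanSpace ℝ (Fin n). Write ∂ᵢg(x) for the directional derivative Dg(x)(eᵢ). If Σᵢ (∂ᵢ(y ↦ ‖f(y)‖)(x))² = Σᵢ ‖∂ᵢf(x)‖², then for every i there exists a real number αᵢ such that ∂ᵢf(x) = αᵢ · f(x). -/

import Mathlib

open scoped RealInnerProductSpace

/-- Equality analysis in the Kato inequality: if
`∑ i (∂ᵢ‖f‖(x))² = ∑ i ‖∂ᵢ f(x)‖²` for a map `f` differentiable at `x` with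
`f x ≠ 0`, then each directional derivative `∂ᵢ f(x)` is a real multiple of
`f x`. -/
theorem kato_equality_case
    {F : Type*} [NormedAddCommGroup F] [InnerProductSpace ℝ F]
    (n : ℕ) (f : EuclideanSpace ℝ (Fin n) → F) (x : EuclideanSpace ℝ (Fin n))
    (hf : DifferentiableAt ℝ f x) (hfx : f x ≠ 0)
    (heq : ∑ i : Fin n,
        (fderiv ℝ (fun y => ‖f y‖) x (EuclideanSpace.single i (1 : ℝ))) ^ 2 =
      ∑ i : Fin n, ‖fderiv ℝ f x (EuclideanSpace.single i (1 : ℝ))‖ ^ 2) :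
    ∀ i : Fin n, ∃ α : ℝ,
      fderiv ℝ f x (EuclideanSpace.single i (1 : ℝ)) = α • f x := by
  set N : EuclideanSpace ℝ (Fin n) → ℝ := fun y => ‖f y‖ with hN
  have hNd : DifferentiableAt ℝ N x := hf.norm ℝ hfx
  have hsq : HasFDerivAt (fun y => ‖f y‖ ^ 2)
      (2 • (innerSL ℝ (f x)).comp (fderiv ℝ f x)) x :=
    hf.hasFDerivAt.norm_sq
  have hsq2 : HasFDerivAt (fun y => ‖f y‖ ^ 2)
      ((2 * N x) • fderiv ℝ N x) x := by
    have h1 := hNd.hasFDerivAt.mul' hNd.hasFDerivAt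
    have h2 : (N x • fderiv ℝ N x + MulOpposite.op (N x) • fderiv ℝ N x)
        = (2 * N x) • fderiv ℝ N x := by
      ext v
      simp [two_mul, mul_comm]
      ring
    rw [h2] at h1
    simpa [sq, Pi.mul_def, hN] using h1
  have hkey : ∀ v, 2 * ⟪f x, fderiv ℝ f x v⟫ = (2 * N x) * fderiv ℝ N x v := by
    intro v
    have := hsq.unique hsq2
    have := congrArg (fun L : EuclideanSpace ℝ (Fin n) →L[ℝ] ℝ => L v) this
    simpa [two_smul, two_mul] using this
  have hNx : (0:ℝ) < ‖f x‖ := norm_pos_iff.2 hfx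
  have hformula : ∀ v, fderiv ℝ N x v = ⟪f x, fderiv ℝ f x v⟫ / ‖f x‖ := by
    intro v
    have h := hkey v
    field_simp [hN]
    linarith [h]
  -- termwise inequality
  have hle : ∀ i : Fin n,
      (fderiv ℝ N x (EuclideanSpace.single i (1:ℝ))) ^ 2 ≤
        ‖fderiv ℝ f x (EuclideanSpace.single i (1:ℝ))‖ ^ 2 := by
    intro i
    rw [hformula]
    rw [div_pow, div_le_iff₀ (by positivity)]
    have := abs_real_inner_le_norm (f x) (fderiv ℝ f x (EuclideanSpace.single i (1:ℝ)))
    calc ⟪f x, fderiv ℝ f x (EuclideanSpace.single i (1:ℝ))⟫ ^ 2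
        ≤ (‖f x‖ * ‖fderiv ℝ f x (EuclideanSpace.single i (1:ℝ))‖)^2 := by
          rw [← sq_abs]; exact pow_le_pow_left₀ (abs_nonneg _) this 2
      _ = _ := by ring
  have heq' : ∀ i ∈ Finset.univ,
      (fderiv ℝ N x (EuclideanSpace.single i (1:ℝ))) ^ 2 =
        ‖fderiv ℝ f x (EuclideanSpace.single i (1:ℝ))‖ ^ 2 :=
    (Finset.sum_eq_sum_iff_of_le (fun i _ => hle i)).1 heq 
      
  intro i
  set v := fderiv ℝ f x (EuclideanSpace.single i (1:ℝ)) with hv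
  have hi := heq' i (Finset.mem_univ i)
  rw [hformula, div_pow] at hi
  have habs : |⟪f x, v⟫| = ‖f x‖ * ‖v‖ := by
    have h1 : ⟪f x, v⟫ ^ 2 = (‖f x‖ * ‖v‖) ^ 2 := by
      field_simp at hi
      nlinarith [hi]
    have := abs_real_inner_le_norm (f x) v
    nlinarith [sq_abs ⟪f x, v⟫, abs_nonneg ⟪f x, v⟫,
      mul_nonneg (norm_nonneg (f x)) (norm_nonneg v)]
  rcases abs_cases (⟪f x, v⟫ : ℝ) with ⟨h, _⟩ | ⟨h, _⟩
  · have hsm : ‖v‖ • f x = ‖f x‖ • v := inner_eq_norm_mul_iff_real.1 (by rw [← h, habs])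
    refine ⟨‖v‖ / ‖f x‖, ?_⟩
    have h3 := congrArg (fun w => (‖f x‖)⁻¹ • w) hsm
    simp only [smul_smul, inv_mul_cancel₀ hNx.ne', one_smul] at h3
    rw [div_eq_inv_mul]
    exact h3.symm
  · have h' : ⟪f x, -v⟫ = ‖f x‖ * ‖-v‖ := by
      rw [inner_neg_right, norm_neg, ← habs]; linarith
    have hsm : ‖-v‖ • f x = ‖f x‖ • (-v) := inner_eq_norm_mul_iff_real.1 h'
    rw [norm_neg, smul_neg] at hsm
    refine ⟨-(‖v‖ / ‖f x‖), ?_⟩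
    have h3 := congrArg (fun w => -((‖f x‖)⁻¹ • w)) hsm
    simp only [smul_smul, neg_neg, inv_mul_cancel₀ hNx.ne', one_smul, smul_neg] at h3
    rw [neg_smul, div_eq_inv_mul]
    exact h3.symm
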